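/- Let U ∈ ℂ^{m×p} and V ∈ ℂ^{q×m} satisfy R(U) + N(V) = ℂ^m. Then the idempotent E := U(VU)†V satisfies N(E) = N(V) and R(E) = R(UU*V*). -/

import Mathlib

open Matrix

/-- The four Penrose conditions characterizing the Moore-Penrose inverse. -/
def IsMoorePenrose {m n : ℕ} (A : Matrix (Fin m) (Fin n) ℂ)
    (X : Matrix (Fin n) (Fin m) ℂ) : Prop :=
  A * X * A = A ∧ X * A * X = X ∧ (A * X)ᴴ = A * X ∧ (X * A)ᴴ = X * A

/-- The range (column space) of a matrix, as a subspace of Euclidean space. -/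
noncomputable def mrange {m n : ℕ} (A : Matrix (Fin m) (Fin n) ℂ) :
    Submodule ℂ (EuclideanSpace ℂ (Fin m)) :=
  LinearMap.range (Matrix.toEuclideanLin A)

/-- The null space of a matrix, as a subspace of Euclidean space. -/
noncomputable def mker {m n : ℕ} (A : Matrix (Fin m) (Fin n) ℂ) :
    Submodule ℂ (EuclideanSpace ℂ (Fin n)) :=
  LinearMap.ker (Matrix.toEuclideanLin A)

lemma toEuclideanLin_mul' {m n k : ℕ} (A : Matrix (Fin m) (Fin n) ℂ)
    (B : Matrix (Fin n) (Fin k) ℂ) :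
    Matrix.toEuclideanLin (A * B) =
      (Matrix.toEuclideanLin A).comp (Matrix.toEuclideanLin B) := by
  ext v
  simp [Matrix.toEuclideanLin_apply, Matrix.mulVec_mulVec]

lemma mrange_mul_le {m n k : ℕ} (A : Matrix (Fin m) (Fin n) ℂ)
    (B : Matrix (Fin n) (Fin k) ℂ) : mrange (A * B) ≤ mrange A := by
  rw [mrange, toEuclideanLin_mul']
  exact LinearMap.range_comp_le_range _ _

/-- If `R(U) + N(V) = ℂ^m`, then the idempotent `E = U (VU)† V` satisfies
`N(E) = N(V)` and `R(E) = R(UU*V*)`. -/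
theorem stmt13 {m p q : ℕ} (U : Matrix (Fin m) (Fin p) ℂ) (V : Matrix (Fin q) (Fin m) ℂ)
    (hsum : mrange U ⊔ mker V = ⊤)
    (X : Matrix (Fin p) (Fin q) ℂ) (hX : IsMoorePenrose (V * U) X) :
    mker (U * X * V) = mker V ∧ mrange (U * X * V) = mrange (U * Uᴴ * Vᴴ) := by
  obtain ⟨h1, h2, h3, h4⟩ := hX
  -- key identity : V * (U * X * V) = V
  have key : V * (U * X * V) = V := by
    apply Matrix.toEuclideanLin.injective
    have hle : mrange U ⊔ mker V ≤
        LinearMap.ker (Matrix.toEuclideanLin (V * (U * X * V)) -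
          Matrix.toEuclideanLin V) := by
      apply sup_le
      · rintro x ⟨y, rfl⟩
        have : (V * (U * X * V)) * U = V * U := by
          have := h1
          calc (V * (U * X * V)) * U = V * U * X * (V * U) := by
                simp [Matrix.mul_assoc]
            _ = V * U := h1
        simp only [LinearMap.mem_ker, LinearMap.sub_apply, sub_eq_zero]
        have h := congrArg (fun M => Matrix.toEuclideanLin M y) this
        simpa [toEuclideanLin_mul'] using h
      · intro x hx
        simp only [mker, LinearMap.mem_ker] at hx
        simp [LinearMap.mem_ker, LinearMap.sub_apply, toEuclideanLin_mul', hx]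
    rw [hsum, top_le_iff] at hle
    ext1 x
    have hx : (Matrix.toEuclideanLin (V * (U * X * V)) -
        Matrix.toEuclideanLin V) x = 0 := by
      have hmem : x ∈ LinearMap.ker (Matrix.toEuclideanLin (V * (U * X * V)) -
          Matrix.toEuclideanLin V) := by rw [hle]; trivial
      exact hmem
    simpa [sub_eq_zero] using hx
  have keyE : (U * X * V) = (U * Uᴴ * Vᴴ) * (Xᴴ * X * V) := by
    -- X = Uᴴ Vᴴ Xᴴ X
    have hx4 : Uᴴ * Vᴴ * Xᴴ = X * (V * U) := by
      calc Uᴴ * Vᴴ * Xᴴ = (X * (V * U))ᴴ := by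
            simp [Matrix.conjTranspose_mul, Matrix.mul_assoc]
        _ = X * (V * U) := h4
    have hXeq : X = Uᴴ * Vᴴ * Xᴴ * X := by
      rw [hx4]
      calc X = X * (V * U) * X := h2.symm
        _ = X * (V * U) * X := rfl
    calc U * X * V = U * (Uᴴ * Vᴴ * Xᴴ * X) * V := by rw [← hXeq]
      _ = (U * Uᴴ * Vᴴ) * (Xᴴ * X * V) := by simp [Matrix.mul_assoc]
  have keyR : (U * Uᴴ * Vᴴ) = (U * X * V) * (U * Uᴴ * Vᴴ) := by
    have hadj : Vᴴ * Xᴴ * Uᴴ * Vᴴ = Vᴴ := by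
      have := congrArg Matrix.conjTranspose key
      simpa [Matrix.conjTranspose_mul, Matrix.mul_assoc] using this
    have hx4 : Uᴴ * Vᴴ * Xᴴ = X * (V * U) := by
      calc Uᴴ * Vᴴ * Xᴴ = (X * (V * U))ᴴ := by
            simp [Matrix.conjTranspose_mul, Matrix.mul_assoc]
        _ = X * (V * U) := h4
    calc U * Uᴴ * Vᴴ = U * (Uᴴ * (Vᴴ * Xᴴ * Uᴴ * Vᴴ)) := by
          rw [hadj]; simp [Matrix.mul_assoc]
      _ = U * (Uᴴ * Vᴴ * Xᴴ) * (Uᴴ * Vᴴ) := by simp [Matrix.mul_assoc]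
      _ = U * (X * (V * U)) * (Uᴴ * Vᴴ) := by rw [hx4]
      _ = (U * X * V) * (U * Uᴴ * Vᴴ) := by simp [Matrix.mul_assoc]
  constructor
  · apply le_antisymm
    · intro x hx
      simp only [mker, LinearMap.mem_ker] at hx ⊢
      have : Matrix.toEuclideanLin (V * (U * X * V)) x = 0 := by
        rw [toEuclideanLin_mul']
        rw [LinearMap.comp_apply, hx, map_zero]
      rwa [key] at this
    · intro x hx
      simp only [mker, LinearMap.mem_ker] at hx ⊢
      have : U * X * V = U * X * V := rfl
      have hUXV : (U * X * V) = (U * X) * V := by rw [Matrix.mul_assoc]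
      rw [hUXV, toEuclideanLin_mul']
      simp [hx]
  · apply le_antisymm
    · rw [keyE]; exact mrange_mul_le _ _
    · conv_lhs => rw [keyR]
      exact mrange_mul_le _ _
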